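/- Let n ≥ 1 and let a_1, …, a_n be integers with a_i ≥ 2. Let E be the chain exponent matrix (diagonal a_i, superdiagonal 1, other entries 0), set ρ_j^{(i)} = (E^{-1})_{ij} and q_i = Σ_{j=1}^{n} (E^{-1})_{ij}. Let 0 ≤ k ≤ ⌊n/2⌋ and let m ∈ ℕ^n satisfy m_{n−2i} = a_{n−2i} − 1 and m_{n−2i−1} = 0 for 0 ≤ i ≤ k−1, and 0 ≤ m_j ≤ a_j − 1 − δ_{j,n−2k} for 1 ≤ j ≤ n−2k (i.e., m lies in the stratum 𝔅^k). Define θ_i(m) = q_i + Σ_{j=1}^{n} m_j ρ_j^{(i)} ∈ ℚ. Then θ_i(m) ∈ ℤ for every i with n−2k < i ≤ n; and if k = 0, then θ_i(m) ∉ ℤ for every i with 1 ≤ i ≤ n. -/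

import Mathlib

/-- For the chain exponent matrix `E` (diagonal `a i`,
superdiagonal `1`, other entries `0`), set `ρ_j^{(i)} = (E⁻¹) i j` and
`q i = ∑_j (E⁻¹) i j`. For a standard vector `m` in the stratum `𝔅^k` of
Kreuzer's index set, let `θ i = q i + ∑_j m j · ρ_j^{(i)}`. Then `θ i ∈ ℤ` for
every `i` in the tail (`0`-based `(i : ℕ) ≥ n − 2k`), and if `k = 0` then
`θ i ∉ ℤ` for every `i`. Indices are `0`-based via `Fin n`; the stratum `𝔅^k`
requires, for `(j : ℕ) ≥ n − 2k`, `m j = a j − 1` when `n − 1 − j` is even and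
`m j = 0` when it is odd, and for `(j : ℕ) < n − 2k`,
`m j ≤ a j − 1 − δ_{j, n−2k−1}`. -/
theorem chain_group_element_fixed_variables {n : ℕ} (hn : 1 ≤ n) (a : ℕ → ℕ)
    (ha : ∀ i < n, 2 ≤ a i)
    (E : Matrix (Fin n) (Fin n) ℚ)
    (hE : ∀ i j : Fin n, E i j =
      if i = j then (a i : ℚ) else if (i : ℕ) + 1 = (j : ℕ) then 1 else 0)
    (k : ℕ) (hk : k ≤ n / 2)
    (m : Fin n → ℕ)
    (hm1 : ∀ j : Fin n, (j : ℕ) < n - 2 * k →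
      m j ≤ a (j : ℕ) - 1 - (if (j : ℕ) = n - 2 * k - 1 then 1 else 0))
    (hm2 : ∀ j : Fin n, n - 2 * k ≤ (j : ℕ) →
      ((n - 1 - (j : ℕ)) % 2 = 0 → m j = a (j : ℕ) - 1) ∧
      ((n - 1 - (j : ℕ)) % 2 = 1 → m j = 0))
    (θ : Fin n → ℚ)
    (hθ : ∀ i : Fin n, θ i = (∑ j : Fin n, E⁻¹ i j) + ∑ j : Fin n, (m j : ℚ) * E⁻¹ i j) :
    (∀ i : Fin n, n - 2 * k ≤ (i : ℕ) → ∃ z : ℤ, θ i = z) ∧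
      (k = 0 → ∀ i : Fin n, ¬∃ z : ℤ, θ i = z) := by
  -- E is invertible
  have hdet : IsUnit E.det := by
    have htri : E.BlockTriangular id := by
      intro i j hij
      rw [hE]
      have h1 : ¬ (i = j) := by intro h; subst h; exact lt_irrefl _ hij
      have h2 : ¬ ((i:ℕ)+1 = (j:ℕ)) := by simp only [id] at hij; omega
      simp [h1, h2]
    rw [Matrix.det_of_upperTriangular htri, isUnit_iff_ne_zero]
    apply Finset.prod_ne_zero_iff.mpr
    intro i _
    rw [hE]
    simp only [if_pos rfl]
    have := ha i i.isLt
    exact Nat.cast_ne_zero.mpr (by omega)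
  have hEE : E * E⁻¹ = 1 := Matrix.mul_nonsing_inv E hdet
  -- θ as a single sum
  have hθ' : ∀ i : Fin n, θ i = ∑ l : Fin n, (1 + (m l : ℚ)) * E⁻¹ i l := by
    intro i
    rw [hθ i, ← Finset.sum_add_distrib]
    congr 1; funext l; ring
  -- the key sum identity : ∑_j E i j * θ j = 1 + m i
  have hval : ∀ i : Fin n, ∑ j : Fin n, E i j * θ j = 1 + (m i : ℚ) := by
    intro i
    calc ∑ j : Fin n, E i j * θ j
        = ∑ j : Fin n, ∑ l : Fin n, (1 + (m l : ℚ)) * (E i j * E⁻¹ j l) := by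
          refine Finset.sum_congr rfl fun j _ => ?_
          rw [hθ' j, Finset.mul_sum]
          refine Finset.sum_congr rfl fun l _ => ?_
          ring
      _ = ∑ l : Fin n, (1 + (m l : ℚ)) * ∑ j : Fin n, E i j * E⁻¹ j l := by
          rw [Finset.sum_comm]
          refine Finset.sum_congr rfl fun l _ => ?_
          rw [Finset.mul_sum]
      _ = ∑ l : Fin n, (1 + (m l : ℚ)) * (E * E⁻¹) i l := by
          refine Finset.sum_congr rfl fun l _ => ?_
          rw [Matrix.mul_apply]
      _ = ∑ l : Fin n, (1 + (m l : ℚ)) * (1 : Matrix (Fin n) (Fin n) ℚ) i l := by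
          rw [hEE]
      _ = 1 + (m i : ℚ) := by
          simp [Matrix.one_apply]
  -- structure of the sum on the left
  have hsum : ∀ i : Fin n, ∑ j : Fin n, E i j * θ j =
      (a (i:ℕ) : ℚ) * θ i + (if h : (i:ℕ)+1 < n then θ ⟨(i:ℕ)+1, h⟩ else 0) := by
    intro i
    have hterm : ∀ j : Fin n, E i j * θ j =
        (if j = i then (a (i:ℕ) : ℚ) * θ j else 0) +
        (if (i:ℕ)+1 = (j:ℕ) then θ j else 0) := by
      intro j
      rw [hE]
      by_cases h1 : i = j
      · subst h1
        have h2 : ¬ ((i:ℕ)+1 = (i:ℕ)) := by omega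
        simp [h2]
      · have h1' : ¬ (j = i) := fun h => h1 h.symm
        by_cases h2 : (i:ℕ)+1 = (j:ℕ) <;> simp [h1, h1', h2]
    rw [Finset.sum_congr rfl fun j _ => hterm j, Finset.sum_add_distrib]
    congr 1
    · rw [Finset.sum_ite_eq' Finset.univ i (fun j => (a (i:ℕ) : ℚ) * θ j)]
      simp
    · by_cases h : (i:ℕ)+1 < n
      · rw [dif_pos h]
        have : ∀ j : Fin n, ((i:ℕ)+1 = (j:ℕ)) ↔ j = ⟨(i:ℕ)+1, h⟩ := by
          intro j
          constructor
          · intro hj; exact Fin.ext hj.symm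
          · intro hj; subst hj; rfl
        rw [Finset.sum_congr rfl fun j _ => by rw [if_congr (this j) rfl rfl]]
        rw [Finset.sum_ite_eq' Finset.univ (⟨(i:ℕ)+1, h⟩ : Fin n) θ]
        simp
      · rw [dif_neg h]
        apply Finset.sum_eq_zero
        intro j _
        have : ¬ ((i:ℕ)+1 = (j:ℕ)) := by have := j.isLt; omega
        simp [this]
  -- the recursion
  have key : ∀ i : Fin n, (a (i:ℕ) : ℚ) * θ i =
      1 + (m i : ℚ) - (if h : (i:ℕ)+1 < n then θ ⟨(i:ℕ)+1, h⟩ else 0) := by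
    intro i
    have := (hsum i).symm.trans (hval i)
    linarith [this]
  -- Part 1: tail values are 0 or 1
  have tail : ∀ d : ℕ, ∀ i : Fin n, n - (i:ℕ) ≤ d → n - 2*k ≤ (i:ℕ) →
      θ i = if (n - 1 - (i:ℕ)) % 2 = 0 then 1 else 0 := by
    intro d
    induction d with
    | zero => intro i h _; have := i.isLt; omega
    | succ d ih =>
      intro i hle hi
      have hilt := i.isLt
      have ha2 := ha i i.isLt
      have hane : (a (i:ℕ) : ℚ) ≠ 0 := Nat.cast_ne_zero.mpr (by omega)
      have hkey := key i
      by_cases h1 : (i:ℕ)+1 < n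
      · have ihv := ih ⟨(i:ℕ)+1, h1⟩ (by simp; omega) (by simp; omega)
        simp only at ihv
        rw [dif_pos h1] at hkey
        by_cases hp : (n - 1 - (i:ℕ)) % 2 = 0
        · have hmi : m i = a (i:ℕ) - 1 := (hm2 i hi).1 hp
          have hp' : ¬ ((n - 1 - ((i:ℕ)+1)) % 2 = 0) := by omega
          rw [if_neg hp'] at ihv
          rw [ihv, hmi] at hkey
          have hc : ((a (i:ℕ) - 1 : ℕ) : ℚ) = (a (i:ℕ) : ℚ) - 1 := by
            push_cast [Nat.cast_sub (by omega : 1 ≤ a (i:ℕ))]; ring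
          rw [hc] at hkey
          rw [if_pos hp]
          field_simp at hkey
          exact mul_left_cancel₀ hane (by linarith [hkey] : (a (i:ℕ) : ℚ) * θ i = (a (i:ℕ) : ℚ) * 1)
        · have hmi : m i = 0 := (hm2 i hi).2 (by omega)
          have hp' : (n - 1 - ((i:ℕ)+1)) % 2 = 0 := by omega
          rw [if_pos hp'] at ihv
          rw [ihv, hmi] at hkey
          rw [if_neg hp]
          simp at hkey
          rcases hkey with h | h
          · exact absurd h (by omega)
          · exact h
      · -- last index
        have hlast : (i:ℕ) = n - 1 := by omega
        have hp : (n - 1 - (i:ℕ)) % 2 = 0 := by omega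
        have hmi : m i = a (i:ℕ) - 1 := (hm2 i hi).1 hp
        rw [dif_neg h1, hmi] at hkey
        have hc : ((a (i:ℕ) - 1 : ℕ) : ℚ) = (a (i:ℕ) : ℚ) - 1 := by
          push_cast [Nat.cast_sub (by omega : 1 ≤ a (i:ℕ))]; ring
        rw [hc] at hkey
        rw [if_pos hp]
        field_simp at hkey
        exact mul_left_cancel₀ hane (by linarith [hkey] : (a (i:ℕ) : ℚ) * θ i = (a (i:ℕ) : ℚ) * 1)
  constructor
  · intro i hi
    have := tail (n - (i:ℕ)) i le_rfl hi
    by_cases hp : (n - 1 - (i:ℕ)) % 2 = 0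
    · exact ⟨1, by rw [this, if_pos hp]; norm_num⟩
    · exact ⟨0, by rw [this, if_neg hp]; norm_num⟩
  · intro hk0 i
    subst hk0
    have pos : ∀ d : ℕ, ∀ i : Fin n, n - (i:ℕ) ≤ d → 0 < θ i ∧ θ i < 1 := by
      intro d
      induction d with
      | zero => intro i h; have := i.isLt; omega
      | succ d ih =>
        intro i hle
        have hilt := i.isLt
        have ha2 := ha i i.isLt
        have hapos : (0:ℚ) < (a (i:ℕ) : ℚ) := by exact_mod_cast (by omega : 0 < a (i:ℕ))
        have hkey := key i
        by_cases h1 : (i:ℕ)+1 < n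
        · have ihv := ih ⟨(i:ℕ)+1, h1⟩ (by simp; omega)
          rw [dif_pos h1] at hkey
          have hne : (i:ℕ) ≠ n - 2 * 0 - 1 := by omega
          have hmb := hm1 i (by omega)
          rw [if_neg hne] at hmb
          have hmb' : (m i : ℚ) + 1 ≤ (a (i:ℕ) : ℚ) := by
            exact_mod_cast (by omega : m i + 1 ≤ a (i:ℕ))
          have hθi : θ i = (1 + (m i : ℚ) - θ ⟨(i:ℕ)+1, h1⟩) / (a (i:ℕ) : ℚ) := by
            field_simp
            linarith [hkey]
          constructor
          · rw [hθi]
            apply div_pos _ hapos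
            have : (0:ℚ) ≤ (m i : ℚ) := Nat.cast_nonneg _
            linarith [ihv.2]
          · rw [hθi, div_lt_one hapos]
            linarith [ihv.1]
        · rw [dif_neg h1] at hkey
          have heq : (i:ℕ) = n - 2 * 0 - 1 := by omega
          have hmb := hm1 i (by omega)
          rw [if_pos heq] at hmb
          have hmb' : (m i : ℚ) + 2 ≤ (a (i:ℕ) : ℚ) := by
            exact_mod_cast (by omega : m i + 2 ≤ a (i:ℕ))
          have hθi : θ i = (1 + (m i : ℚ)) / (a (i:ℕ) : ℚ) := by
            field_simp
            linarith [hkey]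
          constructor
          · rw [hθi]
            apply div_pos _ hapos
            have : (0:ℚ) ≤ (m i : ℚ) := Nat.cast_nonneg _
            linarith
          · rw [hθi, div_lt_one hapos]
            linarith
    rintro ⟨z, hz⟩
    have h := pos (n - (i:ℕ)) i le_rfl
    rw [hz] at h
    have h1 : (0:ℤ) < z := by exact_mod_cast h.1
    have h2 : z < 1 := by exact_mod_cast h.2
    omega
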